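/- Let g, h be Lie algebras with invariants t_g, t_h, and let c ⊂ g be a coisotropic Lie subalgebra. If A is a (g⊕h)-quasi-Poisson algebra, then the subspace A^c of c-invariants is closed under both the product and the bracket, and (A^c, m, {·,·}), with the h-action, is an h-quasi-Poisson algebra. In particular the φ-twisted Jacobi identity for h holds on A^c because the component of φ_{g⊕h} coming from g acts by zero on triples of c-invariants. -/

import Mathlib

open TensorProduct

set_option linter.unusedSectionVars false

/-- The product of two Lie rings is a Lie ring (componentwise bracket). -/
instance prodLieRing (L M : Type*) [LieRing L] [LieRing M] : LieRing (L × M) where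
  bracket p q := (⁅p.1, q.1⁆, ⁅p.2, q.2⁆)
  add_lie x y z := by ext <;> exact add_lie _ _ _
  lie_add x y z := by ext <;> exact lie_add _ _ _
  lie_self x := by ext <;> exact lie_self _
  leibniz_lie x y z := by ext <;> exact leibniz_lie _ _ _

/-- The product of two Lie algebras is a Lie algebra. -/
instance prodLieAlgebra (R L M : Type*) [CommRing R] [LieRing L] [LieRing M]
    [LieAlgebra R L] [LieAlgebra R M] : LieAlgebra R (L × M) where
  lie_smul t x y := by ext <;> exact lie_smul _ _ _

variable {k : Type*} [Field k] [CharZero k]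

/-- The action of an element of `g ⊗ g` on `A ⊗ A` via the two tensor legs. -/
noncomputable def twoLeg {g A : Type*} [LieRing g] [LieAlgebra k g] [CommRing A]
    [Algebra k A] (ρ : g →ₗ[k] Module.End k A) :
    g ⊗[k] g →ₗ[k] Module.End k (A ⊗[k] A) :=
  TensorProduct.lift (((TensorProduct.mapBilinear (RingHom.id k) A A A A).comp ρ).compl₂ ρ)

/-- The action of an element of `g ⊗ (g ⊗ g)` on `A ⊗ (A ⊗ A)` via the three legs. -/
noncomputable def threeLeg {g A : Type*} [LieRing g] [LieAlgebra k g] [CommRing A]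
    [Algebra k A] (ρ : g →ₗ[k] Module.End k A) :
    g ⊗[k] (g ⊗[k] g) →ₗ[k] Module.End k (A ⊗[k] (A ⊗[k] A)) :=
  TensorProduct.lift
    (((TensorProduct.mapBilinear (RingHom.id k) A (A ⊗[k] A) A (A ⊗[k] A)).comp ρ).compl₂ (twoLeg ρ))

/-- The triple product `m⁽³⁾ = m ∘ (1 ⊗ m) : A ⊗ (A ⊗ A) → A`. -/
noncomputable def tripleMul (k : Type*) (A : Type*) [Field k] [CommRing A] [Algebra k A] :
    A ⊗[k] (A ⊗[k] A) →ₗ[k] A :=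
  (LinearMap.mul' k A).comp (TensorProduct.map LinearMap.id (LinearMap.mul' k A))

/-- The element `[t¹², t²³] ∈ g ⊗ g ⊗ g`. -/
noncomputable def tCommutator (k : Type*) {g : Type*} [Field k] [LieRing g]
    [LieAlgebra k g] (t : g ⊗[k] g) : g ⊗[k] (g ⊗[k] g) :=
  (TensorProduct.map LinearMap.id
      (TensorProduct.map (TensorProduct.lift (LieAlgebra.ad k g)) LinearMap.id))
    ((TensorProduct.map LinearMap.id ((TensorProduct.assoc k g g g).symm.toLinearMap))
      ((TensorProduct.assoc k g g (g ⊗[k] g)).toLinearMap (t ⊗ₜ[k] t)))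

/-- The Cartan trivector `φ = (1/4)[t¹², t²³]`. -/
noncomputable def cartanPhi (k : Type*) {g : Type*} [Field k] [LieRing g]
    [LieAlgebra k g] (t : g ⊗[k] g) : g ⊗[k] (g ⊗[k] g) :=
  (4 : k)⁻¹ • tCommutator k t


set_option maxHeartbeats 1000000 in
/-- decomposition of a tensor killed by `mkQ ⊗ mkQ` -/
lemma decomp_coisotropic {g : Type*} [AddCommGroup g] [Module k g] (c : Submodule k g)
    (t : g ⊗[k] g) (h : TensorProduct.map c.mkQ c.mkQ t = 0) :
    ∃ (z : (↥c) ⊗[k] g) (w : g ⊗[k] (↥c)),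
      t = LinearMap.rTensor g c.subtype z + LinearMap.lTensor g c.subtype w := by
  have h1 : LinearMap.rTensor (g ⧸ c) c.mkQ (LinearMap.lTensor g c.mkQ t) = 0 := by
    rw [← LinearMap.comp_apply, LinearMap.rTensor_comp_lTensor]; exact h
  have h2 : LinearMap.lTensor g c.mkQ t ∈
      LinearMap.range (LinearMap.rTensor (g ⧸ c) c.subtype) := by
    rw [← rTensor_mkQ]; exact h1
  obtain ⟨y, hy⟩ := h2
  obtain ⟨z, rfl⟩ := LinearMap.lTensor_surjective (↥c)
    (g := c.mkQ) (Submodule.mkQ_surjective c) y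
  have h3 : LinearMap.lTensor g c.mkQ (t - LinearMap.rTensor g c.subtype z) = 0 := by
    rw [map_sub, sub_eq_zero, ← hy, ← LinearMap.comp_apply, ← LinearMap.comp_apply,
      LinearMap.rTensor_comp_lTensor, LinearMap.lTensor_comp_rTensor]
  have h4 : t - LinearMap.rTensor g c.subtype z ∈
      LinearMap.range (LinearMap.lTensor g c.subtype) := by
    rw [← lTensor_mkQ]; exact h3
  obtain ⟨w, hw⟩ := h4
  exact ⟨z, w, by rw [hw]; abel⟩

/-- Bilinear version of the tCommutator. -/
noncomputable def tComm2L (k : Type*) (g : Type*) [Field k] [LieRing g] [LieAlgebra k g] :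
    (g ⊗[k] g) →ₗ[k] (g ⊗[k] g) →ₗ[k] g ⊗[k] (g ⊗[k] g) :=
  LinearMap.compr₂ (TensorProduct.mk k (g ⊗[k] g) (g ⊗[k] g))
    ((TensorProduct.map LinearMap.id
        (TensorProduct.map (TensorProduct.lift (LieAlgebra.ad k g)) LinearMap.id)) ∘ₗ
      (TensorProduct.map LinearMap.id ((TensorProduct.assoc k g g g).symm.toLinearMap)) ∘ₗ
      (TensorProduct.assoc k g g (g ⊗[k] g)).toLinearMap)

lemma tComm2L_tmul {g : Type*} [LieRing g] [LieAlgebra k g] (a b c d : g) :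
    tComm2L k g (a ⊗ₜ[k] b) (c ⊗ₜ[k] d) = a ⊗ₜ[k] (⁅b, c⁆ ⊗ₜ[k] d) := by
  simp [tComm2L]

lemma tCommutator_eq_tComm2L {g : Type*} [LieRing g] [LieAlgebra k g] (t : g ⊗[k] g) :
    tCommutator k t = tComm2L k g t t := rfl

lemma prod_bracket {g h : Type*} [LieRing g] [LieRing h] (p q : g × h) :
    ⁅p, q⁆ = (⁅p.1, q.1⁆, ⁅p.2, q.2⁆) := rfl

lemma threeLeg_tmul_apply {g A : Type*} [LieRing g] [LieAlgebra k g] [CommRing A]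
    [Algebra k A] (ρ : g →ₗ[k] Module.End k A) (x y w : g) (a₁ a₂ a₃ : A) :
    threeLeg (k := k) ρ (x ⊗ₜ[k] (y ⊗ₜ[k] w)) (a₁ ⊗ₜ[k] (a₂ ⊗ₜ[k] a₃)) =
      ρ x a₁ ⊗ₜ[k] (ρ y a₂ ⊗ₜ[k] ρ w a₃) := by
  simp [threeLeg, twoLeg]

lemma tripleMul_tmul (A : Type*) [CommRing A] [Algebra k A] (a b c : A) :
    tripleMul k A (a ⊗ₜ[k] (b ⊗ₜ[k] c)) = a * (b * c) := by
  simp [tripleMul]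

lemma threeLeg_map {g' g A : Type*} [LieRing g'] [LieAlgebra k g'] [LieRing g]
    [LieAlgebra k g] [CommRing A] [Algebra k A]
    (f : g' →ₗ[k] g) (ρ : g →ₗ[k] Module.End k A) (x : g' ⊗[k] (g' ⊗[k] g')) :
    threeLeg (k := k) ρ (TensorProduct.map f (TensorProduct.map f f) x) =
      threeLeg (k := k) (ρ ∘ₗ f) x := by
  induction x using TensorProduct.induction_on with
  | zero => simp
  | add u v hu hv => rw [map_add, map_add, map_add, hu, hv]
  | tmul a y =>
    induction y using TensorProduct.induction_on with
    | zero => simp [tmul_zero]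
    | add u v hu hv =>
      simp only [TensorProduct.tmul_add, map_add, hu, hv]
    | tmul b c => simp [threeLeg, twoLeg]

set_option maxHeartbeats 4000000 in
/-- let `c ⊂ g` be a coisotropic Lie subalgebra and `A` a
`(g ⊕ h)`-quasi-Poisson algebra.  Then the subspace `A^c` of `c`-invariants is closed
under the product and the bracket, and with the `h`-action it is an `h`-quasi-Poisson
algebra; in particular the `φ_h`-twisted Jacobi identity holds on `A^c`. -/
theorem statement_11
    {g h : Type*} [LieRing g] [LieAlgebra k g] [LieRing h] [LieAlgebra k h]
    (tg : g ⊗[k] g) (th : h ⊗[k] h)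
    (htg_symm : TensorProduct.comm k g g tg = tg) (htg_inv : ∀ x : g, ⁅x, tg⁆ = 0)
    (hth_symm : TensorProduct.comm k h h th = th) (hth_inv : ∀ x : h, ⁅x, th⁆ = 0)
    (c : LieSubalgebra k g)
    (hco : TensorProduct.map (Submodule.mkQ c.toSubmodule) (Submodule.mkQ c.toSubmodule)
        tg = 0)
    {A : Type*} [CommRing A] [Algebra k A]
    (ρ : (g × h) →ₗ[k] Module.End k A)
    (hder : ∀ (p : g × h) (a b : A), ρ p (a * b) = ρ p a * b + a * ρ p b)
    (hlie : ∀ p q : g × h, ρ ⁅p, q⁆ = ρ p * ρ q - ρ q * ρ p)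
    (br : A →ₗ[k] A →ₗ[k] A)
    (hskew : ∀ a b, br a b = - br b a)
    (hbider : ∀ a b c', br a (b * c') = br a b * c' + b * br a c')
    (hinvbr : ∀ (p : g × h) (a b : A), ρ p (br a b) = br (ρ p a) b + br a (ρ p b))
    (hjac : ∀ a₁ a₂ a₃ : A,
      br a₁ (br a₂ a₃) + br a₂ (br a₃ a₁) + br a₃ (br a₁ a₂) =
        - tripleMul k A (threeLeg (k := k) ρ
            (cartanPhi k (TensorProduct.map (LinearMap.inl k g h) (LinearMap.inl k g h) tg
              + TensorProduct.map (LinearMap.inr k g h) (LinearMap.inr k g h) th))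
            (a₁ ⊗ₜ[k] (a₂ ⊗ₜ[k] a₃)))) :
    -- `A^c` is closed under the product
    (∀ a b : A, (∀ ξ ∈ c, ρ (ξ, 0) a = 0) → (∀ ξ ∈ c, ρ (ξ, 0) b = 0) →
        ∀ ξ ∈ c, ρ (ξ, 0) (a * b) = 0)
    -- `A^c` is closed under the bracket
    ∧ (∀ a b : A, (∀ ξ ∈ c, ρ (ξ, 0) a = 0) → (∀ ξ ∈ c, ρ (ξ, 0) b = 0) →
        ∀ ξ ∈ c, ρ (ξ, 0) (br a b) = 0)
    -- the `φ_h`-twisted Jacobi identity holds on `A^c`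
    ∧ (∀ a₁ a₂ a₃ : A,
        (∀ ξ ∈ c, ρ (ξ, 0) a₁ = 0) → (∀ ξ ∈ c, ρ (ξ, 0) a₂ = 0) →
        (∀ ξ ∈ c, ρ (ξ, 0) a₃ = 0) →
        br a₁ (br a₂ a₃) + br a₂ (br a₃ a₁) + br a₃ (br a₁ a₂) =
          - tripleMul k A (threeLeg (k := k) (ρ ∘ₗ LinearMap.inr k g h) (cartanPhi k th)
              (a₁ ⊗ₜ[k] (a₂ ⊗ₜ[k] a₃)))) := by
  classical
  refine ⟨?_, ?_, ?_⟩
  · intro a b ha hb ξ hξ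
    rw [hder, ha ξ hξ, hb ξ hξ, zero_mul, mul_zero, add_zero]
  · intro a b ha hb ξ hξ
    rw [hinvbr, ha ξ hξ, hb ξ hξ, map_zero, map_zero, LinearMap.zero_apply, add_zero]
  · intro a₁ a₂ a₃ h₁ h₂ h₃
    -- abbreviations
    set inl := LinearMap.inl k g h with hinl_def
    set inr := LinearMap.inr k g h with hinr_def
    -- cross terms of the bilinear commutator vanish
    have hc1 : ∀ (u : g ⊗[k] g) (v : h ⊗[k] h),
        tComm2L k (g × h) (TensorProduct.map inl inl u)
          (TensorProduct.map inr inr v) = 0 := by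
      intro u v
      induction u using TensorProduct.induction_on with
      | zero => simp
      | add x y hx hy =>
        rw [map_add, map_add, LinearMap.add_apply, hx, hy, add_zero]
      | tmul a b =>
        induction v using TensorProduct.induction_on with
        | zero => simp
        | add x y hx hy => rw [map_add, map_add, hx, hy, add_zero]
        | tmul cc d =>
          rw [TensorProduct.map_tmul, TensorProduct.map_tmul, tComm2L_tmul]
          have hz : ⁅inl b, inr cc⁆ = (0 : g × h) := by
            rw [prod_bracket]
            simp [hinl_def, hinr_def, Prod.ext_iff]
          rw [hz, TensorProduct.zero_tmul, TensorProduct.tmul_zero]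
    have hc2 : ∀ (v : h ⊗[k] h) (u : g ⊗[k] g),
        tComm2L k (g × h) (TensorProduct.map inr inr v)
          (TensorProduct.map inl inl u) = 0 := by
      intro v u
      induction v using TensorProduct.induction_on with
      | zero => simp
      | add x y hx hy =>
        rw [map_add, map_add, LinearMap.add_apply, hx, hy, add_zero]
      | tmul a b =>
        induction u using TensorProduct.induction_on with
        | zero => simp
        | add x y hx hy => rw [map_add, map_add, hx, hy, add_zero]
        | tmul cc d =>
          rw [TensorProduct.map_tmul, TensorProduct.map_tmul, tComm2L_tmul]
          have hz : ⁅inr b, inl cc⁆ = (0 : g × h) := by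
            rw [prod_bracket]
            simp [hinl_def, hinr_def, Prod.ext_iff]
          rw [hz, TensorProduct.zero_tmul, TensorProduct.tmul_zero]
    -- compatibility of the bilinear commutator with `inl` and `inr`
    have hinlc : ∀ u v : g ⊗[k] g,
        tComm2L k (g × h) (TensorProduct.map inl inl u) (TensorProduct.map inl inl v) =
          TensorProduct.map inl (TensorProduct.map inl inl) (tComm2L k g u v) := by
      intro u v
      induction u using TensorProduct.induction_on with
      | zero => simp
      | add x y hx hy =>
        rw [map_add, map_add, LinearMap.add_apply, hx, hy, map_add, LinearMap.add_apply,
          map_add]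
      | tmul a b =>
        induction v using TensorProduct.induction_on with
        | zero => simp
        | add x y hx hy => rw [map_add, map_add, hx, hy, map_add, map_add]
        | tmul cc d =>
          rw [TensorProduct.map_tmul, TensorProduct.map_tmul, tComm2L_tmul, tComm2L_tmul,
            TensorProduct.map_tmul, TensorProduct.map_tmul]
          have hz : ⁅inl b, inl cc⁆ = inl ⁅b, cc⁆ := by
            rw [prod_bracket]
            simp [hinl_def, Prod.ext_iff]
          rw [hz]
    have hinrc : ∀ u v : h ⊗[k] h,
        tComm2L k (g × h) (TensorProduct.map inr inr u) (TensorProduct.map inr inr v) =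
          TensorProduct.map inr (TensorProduct.map inr inr) (tComm2L k h u v) := by
      intro u v
      induction u using TensorProduct.induction_on with
      | zero => simp
      | add x y hx hy =>
        rw [map_add, map_add, LinearMap.add_apply, hx, hy, map_add, LinearMap.add_apply,
          map_add]
      | tmul a b =>
        induction v using TensorProduct.induction_on with
        | zero => simp
        | add x y hx hy => rw [map_add, map_add, hx, hy, map_add, map_add]
        | tmul cc d =>
          rw [TensorProduct.map_tmul, TensorProduct.map_tmul, tComm2L_tmul, tComm2L_tmul,
            TensorProduct.map_tmul, TensorProduct.map_tmul]
          have hz : ⁅inr b, inr cc⁆ = inr ⁅b, cc⁆ := by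
            rw [prod_bracket]
            simp [hinr_def, Prod.ext_iff]
          rw [hz]
    -- splitting of the Cartan trivector
    have hT : cartanPhi k (TensorProduct.map inl inl tg + TensorProduct.map inr inr th) =
        TensorProduct.map inl (TensorProduct.map inl inl) (cartanPhi k tg) +
          TensorProduct.map inr (TensorProduct.map inr inr) (cartanPhi k th) := by
      rw [cartanPhi, cartanPhi, cartanPhi, tCommutator_eq_tComm2L,
        tCommutator_eq_tComm2L, tCommutator_eq_tComm2L]
      simp only [map_add, LinearMap.add_apply]
      simp only [hc1, hc2, hinlc, hinrc, add_zero, zero_add, smul_add, map_smul]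
    -- the evaluation map
    set ρg : g →ₗ[k] Module.End k A := ρ ∘ₗ inl with hρg
    have h₁' : ∀ x ∈ c, ρg x a₁ = 0 := fun x hx => by
      simpa [hρg, hinl_def] using h₁ x hx
    have h₂' : ∀ x ∈ c, ρg x a₂ = 0 := fun x hx => by
      simpa [hρg, hinl_def] using h₂ x hx
    have h₃' : ∀ x ∈ c, ρg x a₃ = 0 := fun x hx => by
      simpa [hρg, hinl_def] using h₃ x hx
    set Ev : g ⊗[k] (g ⊗[k] g) →ₗ[k] A :=
      (tripleMul k A) ∘ₗ (LinearMap.applyₗ (a₁ ⊗ₜ[k] (a₂ ⊗ₜ[k] a₃))) ∘ₗ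
        (threeLeg (k := k) ρg) with hEvdef
    have hEv : ∀ x y w : g,
        Ev (x ⊗ₜ[k] (y ⊗ₜ[k] w)) = ρg x a₁ * (ρg y a₂ * ρg w a₃) := by
      intro x y w
      show tripleMul k A
        (threeLeg (k := k) ρg (x ⊗ₜ[k] (y ⊗ₜ[k] w)) (a₁ ⊗ₜ[k] (a₂ ⊗ₜ[k] a₃))) = _
      rw [threeLeg_tmul_apply, tripleMul_tmul]
    -- decomposition from coisotropy
    obtain ⟨z, w, htg'⟩ := decomp_coisotropic c.toSubmodule tg hco
    have key1 : ∀ (z : (↥c.toSubmodule) ⊗[k] g) (v : g ⊗[k] g),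
        Ev (tComm2L k g (LinearMap.rTensor g c.toSubmodule.subtype z) v) = 0 := by
      intro z v
      induction z using TensorProduct.induction_on with
      | zero => rw [map_zero, map_zero, LinearMap.zero_apply, map_zero]
      | add x y hx hy =>
        rw [map_add, map_add, LinearMap.add_apply, map_add, hx, hy, add_zero]
      | tmul ξ y =>
        induction v using TensorProduct.induction_on with
        | zero => rw [map_zero, map_zero]
        | add x y' hx hy' => rw [map_add, map_add, hx, hy', add_zero]
        | tmul c' d =>
          rw [LinearMap.rTensor_tmul, tComm2L_tmul, hEv, Submodule.subtype_apply,
            h₁' _ (c.mem_toSubmodule.mp ξ.2), zero_mul]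
    have key2 : ∀ (w : g ⊗[k] (↥c.toSubmodule)) (z : (↥c.toSubmodule) ⊗[k] g),
        Ev (tComm2L k g (LinearMap.lTensor g c.toSubmodule.subtype w)
          (LinearMap.rTensor g c.toSubmodule.subtype z)) = 0 := by
      intro w z
      induction w using TensorProduct.induction_on with
      | zero => rw [map_zero, map_zero, LinearMap.zero_apply, map_zero]
      | add x y hx hy =>
        rw [map_add, map_add, LinearMap.add_apply, map_add, hx, hy, add_zero]
      | tmul a η =>
        induction z using TensorProduct.induction_on with
        | zero => rw [map_zero, map_zero, map_zero]
        | add x y hx hy => rw [map_add, map_add, map_add, hx, hy, add_zero]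
        | tmul ξ d =>
          rw [LinearMap.lTensor_tmul, LinearMap.rTensor_tmul, tComm2L_tmul, hEv,
            Submodule.subtype_apply, Submodule.subtype_apply,
            h₂' _ (c.lie_mem (c.mem_toSubmodule.mp η.2) (c.mem_toSubmodule.mp ξ.2)),
            zero_mul, mul_zero]
    have key3 : ∀ (w w' : g ⊗[k] (↥c.toSubmodule)),
        Ev (tComm2L k g (LinearMap.lTensor g c.toSubmodule.subtype w)
          (LinearMap.lTensor g c.toSubmodule.subtype w')) = 0 := by
      intro w w'
      induction w using TensorProduct.induction_on with
      | zero => rw [map_zero, map_zero, LinearMap.zero_apply, map_zero]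
      | add x y hx hy =>
        rw [map_add, map_add, LinearMap.add_apply, map_add, hx, hy, add_zero]
      | tmul a η =>
        induction w' using TensorProduct.induction_on with
        | zero => rw [map_zero, map_zero, map_zero]
        | add x y hx hy => rw [map_add, map_add, map_add, hx, hy, add_zero]
        | tmul c' δ =>
          rw [LinearMap.lTensor_tmul, LinearMap.lTensor_tmul, tComm2L_tmul, hEv,
            Submodule.subtype_apply, Submodule.subtype_apply,
            h₃' _ (c.mem_toSubmodule.mp δ.2), mul_zero, mul_zero]
    have hzero : Ev (cartanPhi k tg) = 0 := by
      rw [cartanPhi, map_smul, tCommutator_eq_tComm2L, htg']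
      simp only [map_add, LinearMap.add_apply]
      rw [key1, key1, key2, key3]
      simp
    -- conclusion
    rw [hjac, hT, map_add, LinearMap.add_apply, map_add, threeLeg_map, threeLeg_map]
    have hEq : tripleMul k A (threeLeg (k := k) (ρ ∘ₗ inl) (cartanPhi k tg)
        (a₁ ⊗ₜ[k] (a₂ ⊗ₜ[k] a₃))) = Ev (cartanPhi k tg) := rfl
    rw [hEq, hzero, zero_add]
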